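/- arXiv:1908.00235 — 5 statements merged into one kernel-verified Lean document; each statement's English description precedes it below -/
import Mathlib

section
/- Let m be a positive integer. Let R ∈ ℝ^{(m+1)×(m+1)} be upper triangular and invertible, with leading m×m principal submatrix R_m, with r̃ ∈ ℝ^m the vector of the first m entries of the last column of R, and ρ = R_{m+1,m+1} its bottom-right entry. Let Ĥ ∈ ℝ^{(m+1)×m} be a matrix whose first m rows form the matrix H^{(h)} ∈ ℝ^{m×m} and whose last row equals h^{(h)}·e_mᵀ for a scalar h^{(h)} ∈ ℝ. Let H̄ = R·Ĥ·R_m⁻¹ and let H ∈ ℝ^{m×m} be the matrix of the first m rows of H̄. Then H = R_m·H^{(h)}·R_m⁻¹ + (h^{(h)}/(R_m)_{m,m})·r̃·e_mᵀ. -/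
/-- Proposition 2.1, Eq. (2.12): with `R ∈ ℝ^{(m+1)×(m+1)}` upper
triangular invertible, `Rm` its leading `m×m` principal submatrix, `r̃` the first `m`
entries of the last column of `R`, `Ĥ` with first `m` rows `H⁽ʰ⁾` and last row
`h⁽ʰ⁾·e_mᵀ`, `H̄ = R·Ĥ·Rm⁻¹` and `H` the first `m` rows of `H̄`, one has
`H = Rm·H⁽ʰ⁾·Rm⁻¹ + (h⁽ʰ⁾/(Rm)_{m,m})·r̃·e_mᵀ`. -/
theorem arnoldi_hessenberg_projected_matrices_relation
    (m : ℕ) (hm : 0 < m)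
    (R : Matrix (Fin (m + 1)) (Fin (m + 1)) ℝ)
    (htri : ∀ i j : Fin (m + 1), (j : ℕ) < (i : ℕ) → R i j = 0)
    (hinv : IsUnit R)
    (Rm : Matrix (Fin m) (Fin m) ℝ)
    (hRm : Rm = R.submatrix Fin.castSucc Fin.castSucc)
    (rtil : Fin m → ℝ)
    (hrtil : rtil = fun i => R (Fin.castSucc i) (Fin.last m))
    (Hhat : Matrix (Fin (m + 1)) (Fin m) ℝ)
    (Hh : Matrix (Fin m) (Fin m) ℝ) (hh : ℝ)
    (hHh : Hh = Hhat.submatrix Fin.castSucc id)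
    (hrow : ∀ j : Fin m,
      Hhat (Fin.last m) j = hh * (Pi.single (⟨m - 1, by omega⟩ : Fin m) (1 : ℝ) : Fin m → ℝ) j)
    (Hbar : Matrix (Fin (m + 1)) (Fin m) ℝ)
    (hHbar : Hbar = R * Hhat * Rm⁻¹)
    (H : Matrix (Fin m) (Fin m) ℝ)
    (hH : H = Hbar.submatrix Fin.castSucc id) :
    H = Rm * Hh * Rm⁻¹ +
      (hh / Rm ⟨m - 1, by omega⟩ ⟨m - 1, by omega⟩) •
        Matrix.vecMulVec rtil (Pi.single (⟨m - 1, by omega⟩ : Fin m) (1 : ℝ) : Fin m → ℝ) := by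
  set idx : Fin m := ⟨m - 1, by omega⟩ with hidx
  -- diagonal entries of R are nonzero
  have hRtri : R.BlockTriangular id := fun i j h => htri i j h
  have hdetR : R.det ≠ 0 :=
    ((Matrix.isUnit_iff_isUnit_det R).mp hinv).ne_zero
  have hdiag : ∀ i : Fin (m + 1), R i i ≠ 0 := by
    intro i
    have := Matrix.det_of_upperTriangular hRtri
    rw [this] at hdetR
    exact fun h => hdetR (Finset.prod_eq_zero (Finset.mem_univ i) h)
  -- Rm is invertible
  have hRmtri : Rm.BlockTriangular id := by
    intro i j h
    rw [hRm]
    exact htri _ _ h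
  have hdetRm : Rm.det ≠ 0 := by
    rw [Matrix.det_of_upperTriangular hRmtri]
    rw [Finset.prod_ne_zero_iff]
    intro i _
    rw [hRm]
    exact hdiag _
  have hRmunit : IsUnit Rm.det := isUnit_iff_ne_zero.mpr hdetRm
  have hRmmul : Rm * Rm⁻¹ = 1 := Matrix.mul_nonsing_inv _ hRmunit
  have hRmidx : Rm idx idx ≠ 0 := by rw [hRm]; exact hdiag _
  -- last row of Rm is Rm idx idx • e_idx
  have hlastrow : ∀ k : Fin m, k ≠ idx → Rm idx k = 0 := by
    intro k hk
    apply hRmtri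
    have : (k : ℕ) ≠ m - 1 := fun h => hk (Fin.ext h)
    simp only [id]
    have hk' : (k : ℕ) < m := k.isLt
    exact Fin.lt_def.mpr (by simp [hidx]; omega)
  -- row idx of Rm⁻¹
  have hinvrow : ∀ j : Fin m, Rm⁻¹ idx j = (if j = idx then 1 else 0) / Rm idx idx := by
    intro j
    have h1 : (Rm * Rm⁻¹) idx j = (if idx = j then 1 else 0) := by
      rw [hRmmul, Matrix.one_apply]
    rw [Matrix.mul_apply] at h1
    rw [Finset.sum_eq_single idx (fun k _ hk => by rw [hlastrow k hk, zero_mul])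
      (fun h => absurd (Finset.mem_univ idx) h)] at h1
    rw [eq_div_iff hRmidx, mul_comm, h1]
    simp [eq_comm]
  ext i j
  have hA : ∀ k : Fin m, (R * Hhat) (Fin.castSucc i) k
      = (Rm * Hh) i k + rtil i * (hh * (Pi.single idx (1:ℝ) : Fin m → ℝ) k) := by
    intro k
    rw [Matrix.mul_apply, Matrix.mul_apply, Fin.sum_univ_castSucc]
    rw [hrow k, hrtil]
    simp [hRm, hHh]
  have hH' : H i j = ∑ k : Fin m, (R * Hhat) (Fin.castSucc i) k * Rm⁻¹ k j := by
    rw [hH, hHbar]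
    simp [Matrix.mul_apply]
  rw [hH']
  simp only [hA, add_mul, Finset.sum_add_distrib]
  have hs1 : ∑ k : Fin m, (Rm * Hh) i k * Rm⁻¹ k j = (Rm * Hh * Rm⁻¹) i j := by
    rw [Matrix.mul_apply]
  have hs2 : ∑ k : Fin m, rtil i * (hh * (Pi.single idx (1:ℝ) : Fin m → ℝ) k) * Rm⁻¹ k j
      = rtil i * hh * Rm⁻¹ idx j := by
    rw [Finset.sum_eq_single idx (fun k _ hk => by simp [Pi.single_apply, hk])
      (fun h => absurd (Finset.mem_univ idx) h)]
    simp
  rw [hs1, hs2, hinvrow j]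
  simp only [Matrix.add_apply, Matrix.smul_apply, Matrix.vecMulVec_apply, Pi.single_apply,
    smul_eq_mul]
  by_cases hj : j = idx <;> simp [hj] <;> field_simp <;> ring
end

section
/- Let m be a positive integer. Let R ∈ ℝ^{(m+1)×(m+1)} be upper triangular and invertible, with leading m×m principal submatrix R_m. Let Ĥ ∈ ℝ^{(m+1)×m} be a matrix whose first m rows form H^{(h)} ∈ ℝ^{m×m} and whose last row is the zero row (h^{(h)} = 0, happy breakdown). Let H̄ = R·Ĥ·R_m⁻¹ and let H ∈ ℝ^{m×m} be the matrix of the first m rows of H̄. Then H = R_m·H^{(h)}·R_m⁻¹; in particular H and H^{(h)} are similar and have the same characteristic polynomial (hence the same eigenvalues). -/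
open Matrix Polynomial

lemma charpoly_conj' {n : Type*} [Fintype n] [DecidableEq n] (P A : Matrix n n ℝ)
    (h : IsUnit P.det) : (P * A * P⁻¹).charpoly = A.charpoly := by
  have h1 : P * P⁻¹ = 1 := mul_nonsing_inv P h
  have hsc : (scalar n (X : ℝ[X])) = (X : ℝ[X]) • 1 := by
    ext i j; simp [Matrix.scalar_apply, Matrix.smul_apply, Matrix.one_apply, diagonal]
  have key : charmatrix (P * A * P⁻¹) = P.map C * charmatrix A * P⁻¹.map C := by
    rw [charmatrix, charmatrix, RingHom.mapMatrix_apply, RingHom.mapMatrix_apply,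
      mul_sub, sub_mul, hsc]
    congr 1
    · rw [mul_smul_comm, smul_mul_assoc, mul_one, ← Matrix.map_mul, h1,
        Matrix.map_one _ (map_zero C) (map_one C)]
    · simp [Matrix.map_mul]
  have hdet : (P.map C).det * (P⁻¹.map C).det = 1 := by
    rw [← det_mul, ← Matrix.map_mul, h1, Matrix.map_one _ (map_zero C) (map_one C), det_one]
  rw [charpoly, charpoly, key, det_mul, det_mul]
  ring_nf
  rw [mul_comm, ← mul_assoc, mul_comm ((P⁻¹.map C).det), hdet, one_mul]


/-- with `R ∈ ℝ^{(m+1)×(m+1)}` upper triangular invertible, `Rm` its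
leading principal submatrix, `Ĥ ∈ ℝ^{(m+1)×m}` with first `m` rows `H⁽ʰ⁾` and zero
last row (happy breakdown), `H̄ = R·Ĥ·Rm⁻¹` and `H` the first `m` rows of `H̄`, one has
`H = Rm·H⁽ʰ⁾·Rm⁻¹`; in particular `H` and `H⁽ʰ⁾` have the same characteristic
polynomial (hence the same eigenvalues). -/
theorem arnoldi_hessenberg_same_eigenvalues_at_breakdown
    (m : ℕ) (hm : 0 < m)
    (R : Matrix (Fin (m + 1)) (Fin (m + 1)) ℝ)
    (htri : ∀ i j : Fin (m + 1), (j : ℕ) < (i : ℕ) → R i j = 0)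
    (hinv : IsUnit R)
    (Rm : Matrix (Fin m) (Fin m) ℝ)
    (hRm : Rm = R.submatrix Fin.castSucc Fin.castSucc)
    (Hhat : Matrix (Fin (m + 1)) (Fin m) ℝ)
    (Hh : Matrix (Fin m) (Fin m) ℝ)
    (hHh : Hh = Hhat.submatrix Fin.castSucc id)
    (hrow : ∀ j : Fin m, Hhat (Fin.last m) j = 0)
    (Hbar : Matrix (Fin (m + 1)) (Fin m) ℝ)
    (hHbar : Hbar = R * Hhat * Rm⁻¹)
    (H : Matrix (Fin m) (Fin m) ℝ)
    (hH : H = Hbar.submatrix Fin.castSucc id) :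
    H = Rm * Hh * Rm⁻¹ ∧ H.charpoly = Hh.charpoly := by
  -- R's diagonal entries are nonzero
  have hbt : R.BlockTriangular id := fun i j h => htri i j h
  have hdetR : IsUnit R.det := (Matrix.isUnit_iff_isUnit_det R).mp hinv
  have hdiag : ∀ i : Fin (m + 1), R i i ≠ 0 := by
    intro i
    have := hdetR
    rw [Matrix.det_of_upperTriangular hbt] at this
    intro h0
    rw [isUnit_iff_ne_zero] at this
    exact this (Finset.prod_eq_zero (Finset.mem_univ i) h0)
  -- Rm is invertible
  have hdetRm : IsUnit Rm.det := by
    have hbtm : Rm.BlockTriangular id := by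
      intro i j hij
      rw [hRm]
      exact htri _ _ hij
    rw [Matrix.det_of_upperTriangular hbtm, isUnit_iff_ne_zero]
    refine Finset.prod_ne_zero_iff.mpr fun i _ => ?_
    rw [hRm]; exact hdiag _
  -- main equality
  have hmain : H = Rm * Hh * Rm⁻¹ := by
    have hsub : (R * Hhat).submatrix Fin.castSucc id = Rm * Hh := by
      ext i j
      simp only [Matrix.submatrix_apply, Matrix.mul_apply, id]
      rw [Fin.sum_univ_castSucc]
      simp [hrow, hRm, hHh]
    subst hH hHbar
    ext i j
    simp only [Matrix.submatrix_apply, Matrix.mul_apply, id]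
    refine Finset.sum_congr rfl fun x _ => ?_
    have hx := congrFun (congrFun hsub i) x
    simp only [Matrix.submatrix_apply, Matrix.mul_apply, id] at hx
    rw [hx]
  exact ⟨hmain, hmain ▸ charpoly_conj' Rm Hh hdetRm⟩
end

section
/- Let n, m be positive integers. Let A ∈ ℝ^{n×n}, Q ∈ ℝ^{n×(m+1)}, and H̄ ∈ ℝ^{(m+1)×m} satisfy A·Q_m = Q·H̄, where Q_m is the matrix of the first m columns of Q. Let E ∈ ℝ^{(m+1)×m} be the matrix whose top m×m block is the identity I_m and whose last row is zero. Suppose σ ∈ ℝ, u ∈ ℝ^{m+1}, and v ∈ ℝ^m satisfy (H̄ − E)·v = σ·u. Then the vector q = Q_m·v satisfies A·q − q = σ·Q·u. -/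
/-- Theorem 3.1, Eq. (2.4): if `A·Qm = Q·H̄` with `Qm` the first `m`
columns of `Q`, `E` is the `(m+1)×m` matrix with top block `I_m` and zero last row,
and `(H̄ − E)·v = σ·u`, then `q = Qm·v` satisfies `A·q − q = σ·Q·u`. -/
theorem refined_hessenberg_pagerank_residual
    (n m : ℕ) (hn : 0 < n) (hm : 0 < m)
    (A : Matrix (Fin n) (Fin n) ℝ)
    (Q : Matrix (Fin n) (Fin (m + 1)) ℝ)
    (Hbar : Matrix (Fin (m + 1)) (Fin m) ℝ)
    (hdec : A * Q.submatrix id Fin.castSucc = Q * Hbar)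
    (E : Matrix (Fin (m + 1)) (Fin m) ℝ)
    (hE : ∀ (i : Fin (m + 1)) (j : Fin m), E i j = if (i : ℕ) = (j : ℕ) then 1 else 0)
    (σ : ℝ) (u : Fin (m + 1) → ℝ) (v : Fin m → ℝ)
    (hsv : (Hbar - E).mulVec v = σ • u)
    (q : Fin n → ℝ) (hq : q = (Q.submatrix id Fin.castSucc).mulVec v) :
    A.mulVec q - q = σ • Q.mulVec u := by
  have hQE : Q * E = Q.submatrix id Fin.castSucc := by
    ext i j
    simp only [Matrix.mul_apply, Matrix.submatrix_apply, id]
    rw [Finset.sum_eq_single (Fin.castSucc j)]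
    · simp [hE]
    · intro k _ hk
      rw [hE, if_neg, mul_zero]
      intro h
      exact hk (Fin.ext h)
    · simp
  have h1 : A.mulVec q = (Q * Hbar).mulVec v := by
    rw [hq, Matrix.mulVec_mulVec, hdec]
  have h2 : q = (Q * E).mulVec v := by rw [hQE, hq]
  rw [h1, h2, ← Matrix.sub_mulVec, ← Matrix.mul_sub, ← Matrix.mulVec_mulVec,
    hsv, Matrix.mulVec_smul]
end

section
/- Let n, m be positive integers. Let A ∈ ℝ^{n×n}, Q ∈ ℝ^{n×(m+1)} with QᵀQ = I_{m+1} (orthonormal columns), and H̄ ∈ ℝ^{(m+1)×m} satisfy A·Q_m = Q·H̄, where Q_m is the matrix of the first m columns of Q. Let E ∈ ℝ^{(m+1)×m} be the matrix whose top m×m block is I_m and whose last row is zero. Suppose σ ≥ 0, u ∈ ℝ^{m+1} with ‖u‖₂ = 1, and v ∈ ℝ^m satisfy (H̄ − E)·v = σ·u. Then the vector q = Q_m·v satisfies ‖A·q − q‖₂ = σ. -/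
/-- if `Q` has orthonormal columns, `A·Qm = Q·H̄`, `E` is the `(m+1)×m`
matrix with top block `I_m` and zero last row, `σ ≥ 0`, `‖u‖₂ = 1` and
`(H̄ − E)·v = σ·u`, then `q = Qm·v` satisfies `‖A·q − q‖₂ = σ`. -/
theorem refined_arnoldi_pagerank_residual_two_norm
    (n m : ℕ) (hn : 0 < n) (hm : 0 < m)
    (A : Matrix (Fin n) (Fin n) ℝ)
    (Q : Matrix (Fin n) (Fin (m + 1)) ℝ)
    (hortho : Q.transpose * Q = (1 : Matrix (Fin (m + 1)) (Fin (m + 1)) ℝ))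
    (Hbar : Matrix (Fin (m + 1)) (Fin m) ℝ)
    (hdec : A * Q.submatrix id Fin.castSucc = Q * Hbar)
    (E : Matrix (Fin (m + 1)) (Fin m) ℝ)
    (hE : ∀ (i : Fin (m + 1)) (j : Fin m), E i j = if (i : ℕ) = (j : ℕ) then 1 else 0)
    (σ : ℝ) (hσ : 0 ≤ σ) (u : Fin (m + 1) → ℝ) (v : Fin m → ℝ)
    (hu : Real.sqrt (∑ i, u i ^ 2) = 1)
    (hsv : (Hbar - E).mulVec v = σ • u)
    (q : Fin n → ℝ) (hq : q = (Q.submatrix id Fin.castSucc).mulVec v) :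
    Real.sqrt (∑ i, (A.mulVec q - q) i ^ 2) = σ := by
  have hQE : Q.submatrix id Fin.castSucc = Q * E := by
    ext i j
    have : ∀ k : Fin (m + 1), E k j = if k = Fin.castSucc j then 1 else 0 := by
      intro k
      rw [hE]
      congr 1
      simp [Fin.ext_iff]
    simp [Matrix.mul_apply, this]
  have hdec' : A * (Q * E) = Q * Hbar := by rw [← hQE]; exact hdec
  have key : A.mulVec q - q = Q.mulVec (σ • u) := by
    have h1 : A.mulVec ((Q * E).mulVec v) = Q.mulVec (Hbar.mulVec v) := by
      rw [Matrix.mulVec_mulVec, hdec', ← Matrix.mulVec_mulVec]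
    have h2 : (Q * E).mulVec v = Q.mulVec (E.mulVec v) := by
      rw [Matrix.mulVec_mulVec]
    rw [hq, hQE, h1, h2, ← Matrix.mulVec_sub, ← Matrix.sub_mulVec, hsv]
  rw [key]
  have hnorm : ∀ w : Fin (m + 1) → ℝ,
      ∑ i, (Q.mulVec w) i ^ 2 = ∑ j, w j ^ 2 := by
    intro w
    have h1 : dotProduct (Q.mulVec w) (Q.mulVec w) = dotProduct w w := by
      calc dotProduct (Q.mulVec w) (Q.mulVec w)
          = dotProduct (Matrix.vecMul w Q.transpose) (Q.mulVec w) := by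
            rw [Matrix.vecMul_transpose]
        _ = dotProduct w w := by
            rw [Matrix.dotProduct_mulVec, Matrix.vecMul_vecMul, hortho, Matrix.vecMul_one]
    simpa [dotProduct, sq] using h1
  rw [hnorm]
  have : ∑ j, (σ • u) j ^ 2 = σ ^ 2 * ∑ j, u j ^ 2 := by
    simp [Finset.mul_sum, mul_pow]
  rw [this, Real.sqrt_mul (sq_nonneg σ), Real.sqrt_sq hσ, hu, mul_one]
end

section
/- Let n, m be positive integers. Let A ∈ ℝ^{n×n}, Q ∈ ℝ^{n×(m+1)}, and H̄ ∈ ℝ^{(m+1)×m} satisfy A·Q_m = Q·H̄, where Q_m is the matrix of the first m columns of Q. Let E ∈ ℝ^{(m+1)×m} be the matrix whose top m×m block is I_m and whose last row is zero. Suppose σ ≥ 0, u ∈ ℝ^{m+1}, and v ∈ ℝ^m satisfy (H̄ − E)·v = σ·u. Then the vector q = Q_m·v satisfies ‖A·q − q‖₁ = σ·‖Q·u‖₁, where ‖·‖₁ denotes the ℓ¹ norm on ℝ^n. -/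
/-- Eq. (2.5): if `A·Qm = Q·H̄` with `Qm` the first `m` columns of `Q`,
`E` is the `(m+1)×m` matrix with top block `I_m` and zero last row, `σ ≥ 0` and
`(H̄ − E)·v = σ·u`, then `q = Qm·v` satisfies `‖A·q − q‖₁ = σ·‖Q·u‖₁`. -/
theorem refined_hessenberg_pagerank_residual_one_norm
    (n m : ℕ) (hn : 0 < n) (hm : 0 < m)
    (A : Matrix (Fin n) (Fin n) ℝ)
    (Q : Matrix (Fin n) (Fin (m + 1)) ℝ)
    (Hbar : Matrix (Fin (m + 1)) (Fin m) ℝ)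
    (hdec : A * Q.submatrix id Fin.castSucc = Q * Hbar)
    (E : Matrix (Fin (m + 1)) (Fin m) ℝ)
    (hE : ∀ (i : Fin (m + 1)) (j : Fin m), E i j = if (i : ℕ) = (j : ℕ) then 1 else 0)
    (σ : ℝ) (hσ : 0 ≤ σ) (u : Fin (m + 1) → ℝ) (v : Fin m → ℝ)
    (hsv : (Hbar - E).mulVec v = σ • u)
    (q : Fin n → ℝ) (hq : q = (Q.submatrix id Fin.castSucc).mulVec v) :
    ∑ i, |(A.mulVec q - q) i| = σ * ∑ i, |Q.mulVec u i| := by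
  have h1 : A.mulVec q = Q.mulVec (Hbar.mulVec v) := by
    rw [hq, Matrix.mulVec_mulVec, hdec, ← Matrix.mulVec_mulVec]
  have h2 : q = Q.mulVec (E.mulVec v) := by
    rw [hq]
    funext i
    simp only [Matrix.mulVec, dotProduct, Matrix.submatrix_apply, id]
    rw [Fin.sum_univ_castSucc (f := fun k => Q i k * ∑ j, E k j * v j)]
    have hlast : ∑ j, E (Fin.last m) j * v j = 0 := by
      refine Finset.sum_eq_zero fun j _ => ?_
      rw [hE]
      simp [Fin.ext_iff, (j.isLt.ne').symm, Nat.ne_of_gt j.isLt]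
    rw [hlast, mul_zero, add_zero]
    refine Finset.sum_congr rfl fun j _ => ?_
    congr 1
    rw [Finset.sum_eq_single j]
    · rw [hE]; simp
    · intro b _ hb
      rw [hE]
      simp only [Fin.coe_castSucc]
      rw [if_neg (fun h => hb (Fin.ext h.symm)), zero_mul]
    · simp
  have key : A.mulVec q - q = σ • Q.mulVec u := by
    rw [h1, h2, ← Matrix.mulVec_sub, ← Matrix.sub_mulVec, hsv,
      Matrix.mulVec_smul]
  rw [key, Finset.mul_sum]
  refine Finset.sum_congr rfl fun i _ => ?_
  simp [abs_mul, abs_of_nonneg hσ]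
end
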